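/- Let ψ, θ, ε, x₁, x₂ : ℝ → ℝ be twice differentiable satisfying the constraints x₁' = ψ'·cos(θ-ε), x₂' = ψ'·sin(θ-ε), and suppose M·⟨x'', N⟩ = sign(ψ')·a·sin ε where N = (-sin θ, cos θ), a > 0, M > 0, ψ' > 0, and cos ε ≠ 0. Then -ψ''·tan ε + ψ'·(θ' - ε') = (a/M)·tan ε. -/

import Mathlib

/-- Rocard's force law together with the kinematic constraints yields
the second-order constraint -ψ''·tan ε + ψ'·(θ' - ε') = (a/M)·tan ε. -/
theorem stmt6 (M a : ℝ) (hM : 0 < M) (ha : 0 < a) (ψ θ ε x₁ x₂ : ℝ → ℝ)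
    (hψ : ContDiff ℝ 2 ψ) (hθ : ContDiff ℝ 2 θ) (hε : ContDiff ℝ 2 ε)
    (hx₁ : ContDiff ℝ 2 x₁) (hx₂ : ContDiff ℝ 2 x₂)
    (h₁ : ∀ t, deriv x₁ t = deriv ψ t * Real.cos (θ t - ε t))
    (h₂ : ∀ t, deriv x₂ t = deriv ψ t * Real.sin (θ t - ε t))
    (hψ' : ∀ t, 0 < deriv ψ t)
    (hcos : ∀ t, Real.cos (ε t) ≠ 0)
    (hRocard : ∀ t, M * (deriv (deriv x₁) t * (-Real.sin (θ t)) +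
        deriv (deriv x₂) t * Real.cos (θ t)) =
      Real.sign (deriv ψ t) * a * Real.sin (ε t)) :
    ∀ t, -(deriv (deriv ψ) t) * Real.tan (ε t) + deriv ψ t * (deriv θ t - deriv ε t) =
      (a / M) * Real.tan (ε t) := by
  intro t
  have hψ2 : ContDiff ℝ ((1:ℕ) + 1) ψ := by exact_mod_cast hψ
  have hψd : Differentiable ℝ (deriv ψ) :=
    ((contDiff_succ_iff_deriv.mp hψ2).2.2).differentiable (by simp)
  have hθd : Differentiable ℝ θ := hθ.differentiable (by norm_num)
  have hεd : Differentiable ℝ ε := hε.differentiable (by norm_num)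
  have hψ'' : HasDerivAt (deriv ψ) (deriv (deriv ψ) t) t := (hψd t).hasDerivAt
  have hθ' : HasDerivAt θ (deriv θ t) t := (hθd t).hasDerivAt
  have hε' : HasDerivAt ε (deriv ε t) t := (hεd t).hasDerivAt
  have hφ : HasDerivAt (fun t => θ t - ε t) (deriv θ t - deriv ε t) t := hθ'.sub hε'
  have hc : HasDerivAt (fun t => Real.cos (θ t - ε t))
      (-Real.sin (θ t - ε t) * (deriv θ t - deriv ε t)) t := hφ.cos
  have hs : HasDerivAt (fun t => Real.sin (θ t - ε t))
      (Real.cos (θ t - ε t) * (deriv θ t - deriv ε t)) t := hφ.sin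
  have e₁ : deriv (deriv x₁) t =
      deriv (deriv ψ) t * Real.cos (θ t - ε t) +
      deriv ψ t * (-Real.sin (θ t - ε t) * (deriv θ t - deriv ε t)) := by
    have : deriv x₁ = fun t => deriv ψ t * Real.cos (θ t - ε t) := funext h₁
    rw [this]
    exact (hψ''.mul hc).deriv
  have e₂ : deriv (deriv x₂) t =
      deriv (deriv ψ) t * Real.sin (θ t - ε t) +
      deriv ψ t * (Real.cos (θ t - ε t) * (deriv θ t - deriv ε t)) := by
    have : deriv x₂ = fun t => deriv ψ t * Real.sin (θ t - ε t) := funext h₂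
    rw [this]
    exact (hψ''.mul hs).deriv
  have hR := hRocard t
  rw [e₁, e₂, Real.sign_of_pos (hψ' t)] at hR
  rw [Real.sin_sub, Real.cos_sub] at hR
  have hpyθ : Real.sin (θ t) ^ 2 + Real.cos (θ t) ^ 2 = 1 := Real.sin_sq_add_cos_sq _
  have key : M * (-(deriv (deriv ψ) t) * Real.sin (ε t) +
      deriv ψ t * (deriv θ t - deriv ε t) * Real.cos (ε t)) = a * Real.sin (ε t) := by
    linear_combination hR + M * (deriv (deriv ψ) t * Real.sin (ε t) -
      deriv ψ t * (deriv θ t - deriv ε t) * Real.cos (ε t)) * hpyθ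
  rw [Real.tan_eq_sin_div_cos]
  have hM' : M ≠ 0 := ne_of_gt hM
  have hc0 := hcos t
  field_simp
  linear_combination key
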